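/- arXiv:2212.14512 — 2 statements merged into one kernel-verified Lean document; each statement's English description precedes it below -/
import Mathlib

section
/- For every n ≥ 1 and every t ∈ ℝ, the function t ↦ H_n(t) is differentiable and ∂_t H_n = (ξ_{n,n−1} − ξ_{n+1,n}) H_n + H_n (ξ_{n,n−1} − ξ_{n+1,n})^T. -/
open Matrix

attribute [local instance] Matrix.normedAddCommGroup Matrix.normedSpace

noncomputable section

/-- `M_p`: real `p × p` matrices. -/
abbrev Mp (p : ℕ) := Matrix (Fin p) (Fin p) ℝ

/-- The block moment matrix `M_n(t) = (m_{i,j}(t))_{0 ≤ i,j ≤ n−1}`, an `np × np` real matrix. -/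
def blockM {p : ℕ} (m : ℕ → ℕ → ℝ → Mp p) (n : ℕ) (t : ℝ) :
    Matrix (Fin n × Fin p) (Fin n × Fin p) ℝ :=
  Matrix.of fun a b => m a.1 b.1 t a.2 b.2

/-- The row of moments `(m_{n,0}(t), …, m_{n,n−1}(t))`, a `p × np` matrix. -/
def rowm {p : ℕ} (m : ℕ → ℕ → ℝ → Mp p) (n : ℕ) (t : ℝ) : Matrix (Fin p) (Fin n × Fin p) ℝ :=
  Matrix.of fun a b => m n b.1 t a b.2

/-- `ξ_{n,i}(t)`, defined by `(ξ_{n,0},…,ξ_{n,n−1}) = −(m_{n,0},…,m_{n,n−1}) M_n⁻¹` pointwise in `t`. -/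
def xiD {p : ℕ} (m : ℕ → ℕ → ℝ → Mp p) (n : ℕ) (i : Fin n) (t : ℝ) : Mp p :=
  Matrix.of fun a b => ((-(rowm m n t)) * (blockM m n t)⁻¹) a (i, b)

/-- `H_n(t) = m_{n,n}(t) + Σ_{i=0}^{n−1} ξ_{n,i}(t) m_{i,n}(t)`. -/
def HmatD {p : ℕ} (m : ℕ → ℕ → ℝ → Mp p) (n : ℕ) (t : ℝ) : Mp p :=
  m n n t + ∑ i : Fin n, xiD m n i t * m i n t

/-- `V_n(t) = φ_n(t) + Σ_{i=0}^{n−1} ξ_{n,i}(t) φ_i(t)`. -/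
def VD {p : ℕ} (m : ℕ → ℕ → ℝ → Mp p) (φ : ℕ → ℝ → Mp p) (n : ℕ) (t : ℝ) : Mp p :=
  φ n t + ∑ i : Fin n, xiD m n i t * φ i t

/-- `a_n(t) = −V_{n+1}(t) V_n(t)⁻¹`. -/
def aD {p : ℕ} (m : ℕ → ℕ → ℝ → Mp p) (φ : ℕ → ℝ → Mp p) (n : ℕ) (t : ℝ) : Mp p :=
  -(VD m φ (n + 1) t * (VD m φ n t)⁻¹)

/-- `P_n(t,x) = x^n I + Σ_{i=0}^{n−1} ξ_{n,i}(t) x^i`. -/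
def Ppol {p : ℕ} (m : ℕ → ℕ → ℝ → Mp p) (n : ℕ) (t : ℝ) (x : ℝ) : Mp p :=
  x ^ n • (1 : Mp p) + ∑ i : Fin n, x ^ (i : ℕ) • xiD m n i t

section Auxiliary

variable {ι κ ρ : Type*} [Fintype ι] [Fintype κ] [Fintype ρ]

theorem hasDerivAt_matrix {f : ℝ → Matrix ι κ ℝ} {f' : Matrix ι κ ℝ} {t : ℝ} :
    HasDerivAt f f' t ↔ ∀ i j, HasDerivAt (fun s => f s i j) (f' i j) t := by
  exact hasDerivAt_pi.trans (forall_congr' fun i => hasDerivAt_pi)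

theorem HasDerivAt.matmul {A : ℝ → Matrix ι κ ℝ} {B : ℝ → Matrix κ ρ ℝ}
    {A' : Matrix ι κ ℝ} {B' : Matrix κ ρ ℝ} {t : ℝ}
    (hA : HasDerivAt A A' t) (hB : HasDerivAt B B' t) :
    HasDerivAt (fun s => A s * B s) (A' * B t + A t * B') t := by
  rw [hasDerivAt_matrix] at *
  intro i j
  have h : HasDerivAt (fun s => ∑ k, A s i k * B s k j)
      (∑ k, (A' i k * B t k j + A t i k * B' k j)) t :=
    HasDerivAt.fun_sum fun k _ => (hA i k).mul (hB k j)
  simpa [Matrix.mul_apply, Matrix.add_apply, Finset.sum_add_distrib] using h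

theorem HasDerivAt.matrix_transpose {A : ℝ → Matrix ι κ ℝ} {A' : Matrix ι κ ℝ} {t : ℝ}
    (hA : HasDerivAt A A' t) :
    HasDerivAt (fun s => (A s)ᵀ) A'ᵀ t := by
  rw [hasDerivAt_matrix] at *
  exact fun i j => hA j i

theorem differentiableAt_matrix_det [DecidableEq ι] {f : ℝ → Matrix ι ι ℝ} {t : ℝ}
    (hf : ∀ i j, DifferentiableAt ℝ (fun s => f s i j) t) :
    DifferentiableAt ℝ (fun s => (f s).det) t := by
  simp only [Matrix.det_apply, Units.smul_def, zsmul_eq_mul]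
  refine DifferentiableAt.fun_sum fun σ _ => DifferentiableAt.const_mul ?_ _
  exact DifferentiableAt.fun_finsetProd fun i _ => hf _ _

theorem differentiableAt_matrix_inv [DecidableEq ι] {f : ℝ → Matrix ι ι ℝ} {t : ℝ}
    (hf : ∀ i j, DifferentiableAt ℝ (fun s => f s i j) t) (hu : IsUnit (f t)) (i j : ι) :
    DifferentiableAt ℝ (fun s => (f s)⁻¹ i j) t := by
  have hdet : ∀ s : ℝ, (f s)⁻¹ i j = ((f s).det)⁻¹ * (f s).adjugate i j := by
    intro s
    rw [Matrix.inv_def, Matrix.smul_apply, Ring.inverse_eq_inv, smul_eq_mul]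
  simp only [hdet]
  have h1 : DifferentiableAt ℝ (fun s => (f s).det) t := differentiableAt_matrix_det hf
  have h2 : (f t).det ≠ 0 := IsUnit.ne_zero ((Matrix.isUnit_iff_isUnit_det _).1 hu)
  refine DifferentiableAt.mul (h1.inv h2) ?_
  simp only [Matrix.adjugate_apply]
  refine differentiableAt_matrix_det fun a b => ?_
  simp only [Matrix.updateRow_apply]
  by_cases hab : a = j <;> simp [hab, hf]

theorem hasDerivAt_matrix_inv [DecidableEq ι] {f : ℝ → Matrix ι ι ℝ} {f' : Matrix ι ι ℝ} {t : ℝ}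
    (hf : HasDerivAt f f' t) (hu : ∀ s, IsUnit (f s)) :
    HasDerivAt (fun s => (f s)⁻¹) (-((f t)⁻¹ * f' * (f t)⁻¹)) t := by
  have hent : ∀ i j, DifferentiableAt ℝ (fun s => f s i j) t := fun i j =>
    (hasDerivAt_matrix.1 hf i j).differentiableAt
  set G : Matrix ι ι ℝ := Matrix.of fun i j => deriv (fun s => (f s)⁻¹ i j) t with hGdef
  have hG : HasDerivAt (fun s => (f s)⁻¹) G t :=
    hasDerivAt_matrix.2 fun i j => (differentiableAt_matrix_inv hent (hu t) i j).hasDerivAt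
  have hmul : HasDerivAt (fun s => f s * (f s)⁻¹) (f' * (f t)⁻¹ + f t * G) t := hf.matmul hG
  have hconst : (fun s => f s * (f s)⁻¹) = fun _ => (1 : Matrix ι ι ℝ) := by
    funext s
    exact Matrix.mul_nonsing_inv _ ((Matrix.isUnit_iff_isUnit_det _).1 (hu s))
  rw [hconst] at hmul
  have hzero : f' * (f t)⁻¹ + f t * G = 0 := hmul.unique (hasDerivAt_const t _)
  have hinv1 : (f t)⁻¹ * f t = 1 :=
    Matrix.nonsing_inv_mul _ ((Matrix.isUnit_iff_isUnit_det _).1 (hu t))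
  have hGval : G = -((f t)⁻¹ * f' * (f t)⁻¹) := by
    have h1 : f t * G = -(f' * (f t)⁻¹) := by
      rw [eq_neg_iff_add_eq_zero, add_comm]; exact hzero
    calc G = ((f t)⁻¹ * f t) * G := by rw [hinv1, one_mul]
    _ = (f t)⁻¹ * (f t * G) := by rw [mul_assoc]
    _ = (f t)⁻¹ * -(f' * (f t)⁻¹) := by rw [h1]
    _ = -((f t)⁻¹ * f' * (f t)⁻¹) := by rw [mul_neg, mul_assoc]
  rwa [hGval] at hG

end Auxiliary

theorem xi_orth {p : ℕ} (m : ℕ → ℕ → ℝ → Mp p) (hM : ∀ n t, IsUnit (blockM m n t))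
    (k : ℕ) (t : ℝ) (j : Fin k) :
    ∑ i : Fin k, xiD m k i t * m i j t = -(m k j t) := by
  have hdet := (Matrix.isUnit_iff_isUnit_det _).1 (hM k t)
  have h1 : (-(rowm m k t)) * (blockM m k t)⁻¹ * blockM m k t = -(rowm m k t) := by
    rw [Matrix.mul_assoc, Matrix.nonsing_inv_mul _ hdet, Matrix.mul_one]
  ext a b
  have h2 := congrFun (congrFun h1 a) (j, b)
  simp only [Matrix.mul_apply, Fintype.sum_prod_type, blockM, rowm, Matrix.of_apply,
    Matrix.neg_apply] at h2
  simp only [Matrix.sum_apply, Matrix.mul_apply, xiD, Matrix.of_apply, Matrix.neg_apply,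
    Fintype.sum_prod_type, blockM, rowm]
  exact h2

theorem Hrepr {p : ℕ} (m : ℕ → ℕ → ℝ → Mp p) (hsym : ∀ i j t, m i j t = (m j i t)ᵀ)
    (n : ℕ) (t : ℝ) :
    HmatD m n t = m n n t + ((-(rowm m n t)) * (blockM m n t)⁻¹) * (rowm m n t)ᵀ := by
  unfold HmatD
  congr 1
  ext a b
  have hs : ∀ (i : Fin n) (c : Fin p), m (i : ℕ) n t c b = m n (i : ℕ) t b c := by
    intro i c; rw [hsym (i : ℕ) n t]; rfl
  simp only [Matrix.sum_apply, Matrix.mul_apply, xiD, Matrix.of_apply, Fintype.sum_prod_type,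
    Matrix.transpose_apply, rowm, Matrix.neg_apply, hs]

theorem alg1 {P Q : Type*} [Fintype P] [Fintype Q]
    (f : Matrix P P ℝ) (r Ψ Z R' : Matrix P Q ℝ) (N M' : Matrix Q Q ℝ) (Φ : Matrix Q P ℝ)
    (hZ : Z = (-r) * N) (hNsym : Nᵀ = N) (hR' : R' = f * Ψ) (hM' : M' = Φ * Ψ)
    (hkey : Ψᵀ * fᵀ = Φ * f) :
    f * f + (((-R') * N + (-r) * (-(N * M' * N))) * rᵀ + Z * R'ᵀ)
      = (f + Z * Φ) * (f + Ψ * Zᵀ) := by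
  subst hZ hR' hM'
  simp only [Matrix.transpose_mul, Matrix.transpose_neg, hNsym, Matrix.neg_mul,
    Matrix.mul_neg, neg_neg, Matrix.add_mul, Matrix.mul_add, Matrix.mul_assoc, hkey]
  abel

open Finset in
theorem alg2 {p n : ℕ} (hn : 1 ≤ n) (P Q : ℕ → Mp p) (mm : ℕ → ℕ → Mp p) (φv : ℕ → Mp p)
    (H β : Mp p)
    (hsym : ∀ i j, mm i j = (mm j i)ᵀ)
    (hphi : ∀ i j, mm (i + 1) j + mm i (j + 1) = φv i * φv j)
    (hOP : ∀ j < n, ∑ i ∈ range (n + 1), P i * mm i j = 0)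
    (hOPH : ∑ i ∈ range (n + 1), P i * mm i n = H)
    (hOQ : ∀ j < n + 1, ∑ i ∈ range (n + 2), Q i * mm i j = 0)
    (hPn : P n = 1) (hPn1 : P (n + 1) = 0) (hQn1 : Q (n + 1) = 1)
    (hβ : β = P (n - 1) - Q n)
    (hHsym : Hᵀ = H) :
    (∑ k ∈ range (n + 1), P k * φv k) * (∑ l ∈ range (n + 1), φv l * (P l)ᵀ)
      = β * H + H * βᵀ := by
  set T : ℕ → Mp p := fun d => (if d = 0 then 0 else P (d - 1)) - Q d - β * P d with hT
  have hdecomp : ∀ d, (if d = 0 then 0 else P (d - 1)) = Q d + β * P d + T d := by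
    intro d
    have h : T d = (if d = 0 then 0 else P (d - 1)) - Q d - β * P d := rfl
    rw [h]
    generalize (if d = 0 then 0 else P (d - 1)) = X
    abel
  have hTn : T n = 0 := by
    have : T n = (if n = 0 then 0 else P (n - 1)) - Q n - β * P n := rfl
    rw [this, if_neg (by omega : ¬ n = 0), hPn, mul_one, hβ]
    abel
  have hTn1 : T (n + 1) = 0 := by
    have : T (n + 1) = (if n + 1 = 0 then 0 else P (n + 1 - 1)) - Q (n + 1) - β * P (n + 1) :=
      rfl
    rw [this, if_neg (by omega : ¬ n + 1 = 0), Nat.add_sub_cancel, hPn, hPn1, hQn1, mul_zero]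
    abel
  have hshift : ∀ l, ∑ k ∈ range (n + 1), P k * mm (k + 1) l
      = ∑ d ∈ range (n + 2), (if d = 0 then 0 else P (d - 1)) * mm d l := by
    intro l
    rw [Finset.sum_range_succ' (fun d => (if d = 0 then 0 else P (d - 1)) * mm d l) (n + 1)]
    simp
  have hinner : ∀ l, ∑ k ∈ range (n + 1), P k * mm (k + 1) l
      = (∑ d ∈ range (n + 2), Q d * mm d l)
        + β * (∑ d ∈ range (n + 1), P d * mm d l)
        + ∑ d ∈ range n, T d * mm d l := by
    intro l
    rw [hshift l]
    have h1 : ∀ d, (if d = 0 then 0 else P (d - 1)) * mm d l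
        = Q d * mm d l + (β * P d) * mm d l + T d * mm d l := fun d => by
      rw [hdecomp d, add_mul, add_mul]
    rw [Finset.sum_congr rfl fun d _ => h1 d, Finset.sum_add_distrib, Finset.sum_add_distrib]
    congr 1
    · congr 1
      calc ∑ d ∈ range (n + 2), (β * P d) * mm d l
          = ∑ d ∈ range (n + 1), (β * P d) * mm d l := by
            rw [Finset.sum_range_succ, hPn1]; simp
        _ = β * ∑ d ∈ range (n + 1), P d * mm d l := by
            rw [Finset.mul_sum]
            exact Finset.sum_congr rfl fun d _ => mul_assoc _ _ _
    · rw [Finset.sum_range_succ, Finset.sum_range_succ, hTn, hTn1]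
      simp
  set A : Mp p := ∑ l ∈ range (n + 1), ∑ k ∈ range (n + 1), P k * mm (k + 1) l * (P l)ᵀ with hA
  set B : Mp p := ∑ l ∈ range (n + 1), ∑ k ∈ range (n + 1), P k * mm k (l + 1) * (P l)ᵀ with hB
  have hmain : (∑ k ∈ range (n + 1), P k * φv k) * (∑ l ∈ range (n + 1), φv l * (P l)ᵀ)
      = A + B := by
    rw [Finset.sum_mul_sum]
    rw [Finset.sum_comm]
    rw [hA, hB, ← Finset.sum_add_distrib]
    refine Finset.sum_congr rfl fun l _ => ?_
    rw [← Finset.sum_add_distrib]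
    refine Finset.sum_congr rfl fun k _ => ?_
    calc (P k * φv k) * (φv l * (P l)ᵀ) = P k * ((φv k * φv l) * (P l)ᵀ) := by
          simp only [mul_assoc]
      _ = P k * ((mm (k + 1) l + mm k (l + 1)) * (P l)ᵀ) := by rw [hphi k l]
      _ = P k * mm (k + 1) l * (P l)ᵀ + P k * mm k (l + 1) * (P l)ᵀ := by
          rw [add_mul, mul_add]; simp only [mul_assoc]
  have hAval : A = β * H := by
    rw [hA]
    have h2 : ∀ l, ∑ k ∈ range (n + 1), P k * mm (k + 1) l * (P l)ᵀ
        = ((∑ d ∈ range (n + 2), Q d * mm d l)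
            + β * (∑ d ∈ range (n + 1), P d * mm d l)
            + ∑ d ∈ range n, T d * mm d l) * (P l)ᵀ := by
      intro l
      rw [← Finset.sum_mul, hinner l]
    rw [Finset.sum_congr rfl fun l _ => h2 l]
    have h3 : ∀ l ∈ range (n + 1),
        ((∑ d ∈ range (n + 2), Q d * mm d l)
            + β * (∑ d ∈ range (n + 1), P d * mm d l)
            + ∑ d ∈ range n, T d * mm d l) * (P l)ᵀ
        = (β * (∑ d ∈ range (n + 1), P d * mm d l)) * (P l)ᵀ
          + (∑ d ∈ range n, T d * mm d l) * (P l)ᵀ := by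
      intro l hl
      rw [hOQ l (Finset.mem_range.1 hl), zero_add, add_mul]
    rw [Finset.sum_congr rfl h3, Finset.sum_add_distrib]
    have h4 : ∑ l ∈ range (n + 1), (∑ d ∈ range n, T d * mm d l) * (P l)ᵀ = 0 := by
      have h5 : ∀ l, (∑ d ∈ range n, T d * mm d l) * (P l)ᵀ
          = ∑ d ∈ range n, T d * (mm d l * (P l)ᵀ) := by
        intro l
        rw [Finset.sum_mul]
        exact Finset.sum_congr rfl fun d _ => mul_assoc _ _ _
      rw [Finset.sum_congr rfl fun l _ => h5 l, Finset.sum_comm]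
      refine Finset.sum_eq_zero fun d hd => ?_
      rw [← Finset.mul_sum]
      have h6 : ∑ l ∈ range (n + 1), mm d l * (P l)ᵀ
          = (∑ l ∈ range (n + 1), P l * mm l d)ᵀ := by
        rw [Matrix.transpose_sum]
        refine Finset.sum_congr rfl fun l _ => ?_
        rw [Matrix.transpose_mul, ← hsym d l]
      rw [h6, hOP d (Finset.mem_range.1 hd), Matrix.transpose_zero, mul_zero]
    rw [h4, add_zero]
    rw [Finset.sum_range_succ]
    have h7 : ∀ l ∈ range n, (β * (∑ d ∈ range (n + 1), P d * mm d l)) * (P l)ᵀ = 0 := by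
      intro l hl
      rw [hOP l (Finset.mem_range.1 hl), mul_zero, zero_mul]
    rw [Finset.sum_eq_zero h7, zero_add, hOPH, hPn, Matrix.transpose_one, mul_one]
  have hBval : B = H * βᵀ := by
    have hBA : B = Aᵀ := by
      rw [hA, hB, Matrix.transpose_sum]
      rw [Finset.sum_comm]
      refine Finset.sum_congr rfl fun l _ => ?_
      rw [Matrix.transpose_sum]
      refine Finset.sum_congr rfl fun k _ => ?_
      rw [Matrix.transpose_mul, Matrix.transpose_mul, Matrix.transpose_transpose,
        ← hsym l (k + 1), mul_assoc]
    rw [hBA, hAval, Matrix.transpose_mul, hHsym]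
  rw [hmain, hAval, hBval]

/-- For every `n ≥ 1` and every `t ∈ ℝ`, `t ↦ H_n(t)` is differentiable and
`∂_t H_n = (ξ_{n,n−1} − ξ_{n+1,n}) H_n + H_n (ξ_{n,n−1} − ξ_{n+1,n})ᵀ`. -/
theorem stmt10 {p : ℕ} (hp : 1 ≤ p) (m : ℕ → ℕ → ℝ → Mp p) (φ : ℕ → ℝ → Mp p)
    (hsym : ∀ i j t, m i j t = (m j i t)ᵀ)
    (hderiv : ∀ i j t, HasDerivAt (m i j) (m (i + 1) j t + m i (j + 1) t) t)
    (hphi : ∀ i j t, m (i + 1) j t + m i (j + 1) t = φ i t * φ j t)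
    (hM : ∀ n t, IsUnit (blockM m n t))
    (n : ℕ) (hn : 1 ≤ n) :
    ∀ t : ℝ,
      HasDerivAt (HmatD m n)
        ((xiD m n ⟨n - 1, by omega⟩ t - xiD m (n + 1) ⟨n, by omega⟩ t) * HmatD m n t
          + HmatD m n t * (xiD m n ⟨n - 1, by omega⟩ t - xiD m (n + 1) ⟨n, by omega⟩ t)ᵀ) t := by
  intro t
  classical
  have hm' : ∀ i j : ℕ, HasDerivAt (m i j) (φ i t * φ j t) t := fun i j =>
    hphi i j t ▸ hderiv i j t
  -- values at `t`
  set N : Matrix (Fin n × Fin p) (Fin n × Fin p) ℝ := (blockM m n t)⁻¹ with hNdef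
  set r : Matrix (Fin p) (Fin n × Fin p) ℝ := rowm m n t with hrdef
  set Z : Matrix (Fin p) (Fin n × Fin p) ℝ := (-(rowm m n t)) * (blockM m n t)⁻¹ with hZdef
  set M' : Matrix (Fin n × Fin p) (Fin n × Fin p) ℝ :=
    Matrix.of (fun a b => (φ a.1 t * φ b.1 t) a.2 b.2) with hM'def
  set R' : Matrix (Fin p) (Fin n × Fin p) ℝ :=
    Matrix.of (fun a b => (φ n t * φ b.1 t) a b.2) with hR'def
  -- derivatives
  have hMder : HasDerivAt (blockM m n) M' t := by
    refine hasDerivAt_matrix.2 fun a b => ?_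
    have := hasDerivAt_matrix.1 (hm' a.1 b.1) a.2 b.2
    simpa [blockM, hM'def] using this
  have hrd : HasDerivAt (rowm m n) R' t := by
    refine hasDerivAt_matrix.2 fun a b => ?_
    have := hasDerivAt_matrix.1 (hm' n b.1) a b.2
    simpa [rowm, hR'def] using this
  have hNder : HasDerivAt (fun s => (blockM m n s)⁻¹) (-(N * M' * N)) t :=
    hasDerivAt_matrix_inv hMder (hM n)
  have hZder : HasDerivAt (fun s => (-(rowm m n s)) * (blockM m n s)⁻¹)
      ((-R') * N + (-r) * (-(N * M' * N))) t := hrd.neg.matmul hNder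
  have hrT : HasDerivAt (fun s => (rowm m n s)ᵀ) R'ᵀ t := hrd.matrix_transpose
  have hHd : HasDerivAt (HmatD m n)
      (φ n t * φ n t + (((-R') * N + (-r) * (-(N * M' * N))) * rᵀ + Z * R'ᵀ)) t := by
    have h2 : HmatD m n
        = fun s => m n n s + ((-(rowm m n s)) * (blockM m n s)⁻¹) * (rowm m n s)ᵀ :=
      funext (Hrepr m hsym n)
    rw [h2]
    exact (hm' n n).add (hZder.matmul hrT)
  -- symmetry facts
  have hMsym : (blockM m n t)ᵀ = blockM m n t := by
    ext a b
    show blockM m n t b a = blockM m n t a b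
    show m b.1 a.1 t b.2 a.2 = m a.1 b.1 t a.2 b.2
    rw [hsym a.1 b.1 t]
    rfl
  have hNsym : Nᵀ = N := by
    rw [hNdef, Matrix.transpose_nonsing_inv, hMsym]
  -- the auxiliary big matrices
  set Ψ : Matrix (Fin p) (Fin n × Fin p) ℝ := Matrix.of (fun a b => φ b.1 t a b.2) with hΨdef
  set Φb : Matrix (Fin n × Fin p) (Fin p) ℝ := Matrix.of (fun a c => φ a.1 t a.2 c) with hΦdef
  have hR'eq : R' = φ n t * Ψ := by
    ext a b
    simp [hR'def, hΨdef, Matrix.mul_apply]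
  have hM'eq : M' = Φb * Ψ := by
    ext a b
    simp [hM'def, hΨdef, hΦdef, Matrix.mul_apply]
  have hcomm : ∀ i : ℕ, φ i t * φ n t = (φ n t * φ i t)ᵀ := by
    intro i
    rw [← hphi i n t, ← hphi n i t, hsym (i + 1) n t, hsym i (n + 1) t,
      ← Matrix.transpose_add, add_comm]
  have hkey : Ψᵀ * (φ n t)ᵀ = Φb * φ n t := by
    ext x b
    have h := congrFun (congrFun (hcomm (x.1 : ℕ)) x.2) b
    simp only [Matrix.transpose_apply, Matrix.mul_apply] at h ⊢
    simp only [hΨdef, hΦdef, Matrix.of_apply]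
    rw [h]
    exact Finset.sum_congr rfl fun c _ => mul_comm _ _
  -- the algebraic identity for the derivative
  have halg1 : φ n t * φ n t + (((-R') * N + (-r) * (-(N * M' * N))) * rᵀ + Z * R'ᵀ)
      = (φ n t + Z * Φb) * (φ n t + Ψ * Zᵀ) :=
    alg1 (φ n t) r Ψ Z R' N M' Φb hZdef hNsym hR'eq hM'eq hkey
  -- ℕ-indexed coefficient sequences
  set P : ℕ → Mp p := fun k => if h : k < n then xiD m n ⟨k, h⟩ t
    else if k = n then 1 else 0 with hPdef
  set Q : ℕ → Mp p := fun k => if h : k < n + 1 then xiD m (n + 1) ⟨k, h⟩ t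
    else if k = n + 1 then 1 else 0 with hQdef
  have hPlt : ∀ (i : Fin n), P (i : ℕ) = xiD m n i t := by
    intro i
    simp only [hPdef, dif_pos i.isLt, Fin.eta]
  have hQlt : ∀ (i : Fin (n + 1)), Q (i : ℕ) = xiD m (n + 1) i t := by
    intro i
    simp only [hQdef, dif_pos i.isLt, Fin.eta]
  have hPn : P n = 1 := by simp [hPdef]
  have hPn1 : P (n + 1) = 0 := by
    simp only [hPdef, dif_neg (by omega : ¬ n + 1 < n)]
    rw [if_neg (by omega : ¬ n + 1 = n)]
  have hQn1 : Q (n + 1) = 1 := by simp [hQdef]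
  -- orthogonality relations
  have hOP : ∀ j < n, ∑ i ∈ Finset.range (n + 1), P i * m i j t = 0 := by
    intro j hj
    rw [Finset.sum_range_succ, hPn, one_mul]
    have h1 : ∑ i ∈ Finset.range n, P i * m i j t
        = ∑ i : Fin n, xiD m n i t * m i j t := by
      rw [← Fin.sum_univ_eq_sum_range (fun k => P k * m k j t) n]
      exact Finset.sum_congr rfl fun i _ => by rw [hPlt i]
    rw [h1, xi_orth m hM n t ⟨j, hj⟩, neg_add_cancel]
  have hOPH : ∑ i ∈ Finset.range (n + 1), P i * m i n t = HmatD m n t := by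
    rw [Finset.sum_range_succ, hPn, one_mul]
    have h1 : ∑ i ∈ Finset.range n, P i * m i n t
        = ∑ i : Fin n, xiD m n i t * m i n t := by
      rw [← Fin.sum_univ_eq_sum_range (fun k => P k * m k n t) n]
      exact Finset.sum_congr rfl fun i _ => by rw [hPlt i]
    rw [h1]
    unfold HmatD
    rw [add_comm]
  have hOQ : ∀ j < n + 1, ∑ i ∈ Finset.range (n + 2), Q i * m i j t = 0 := by
    intro j hj
    rw [Finset.sum_range_succ, hQn1, one_mul]
    have h1 : ∑ i ∈ Finset.range (n + 1), Q i * m i j t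
        = ∑ i : Fin (n + 1), xiD m (n + 1) i t * m i j t := by
      rw [← Fin.sum_univ_eq_sum_range (fun k => Q k * m k j t) (n + 1)]
      exact Finset.sum_congr rfl fun i _ => by rw [hQlt i]
    rw [h1, xi_orth m hM (n + 1) t ⟨j, hj⟩, neg_add_cancel]
  -- identification of V and W with ℕ-indexed sums
  have hVs : φ n t + Z * Φb = ∑ k ∈ Finset.range (n + 1), P k * φ k t := by
    rw [Finset.sum_range_succ, hPn, one_mul]
    have h1 : ∑ k ∈ Finset.range n, P k * φ k t = ∑ i : Fin n, xiD m n i t * φ i t := by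
      rw [← Fin.sum_univ_eq_sum_range (fun k => P k * φ k t) n]
      exact Finset.sum_congr rfl fun i _ => by rw [hPlt i]
    rw [h1, add_comm]
    congr 1
    ext a b
    simp only [Matrix.mul_apply, Matrix.sum_apply, Fintype.sum_prod_type, xiD, Matrix.of_apply,
      hΦdef, hZdef]
  have hWs : φ n t + Ψ * Zᵀ = ∑ l ∈ Finset.range (n + 1), φ l t * (P l)ᵀ := by
    rw [Finset.sum_range_succ, hPn, Matrix.transpose_one, mul_one]
    have h1 : ∑ l ∈ Finset.range n, φ l t * (P l)ᵀ
        = ∑ i : Fin n, φ i t * (xiD m n i t)ᵀ := by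
      rw [← Fin.sum_univ_eq_sum_range (fun k => φ k t * (P k)ᵀ) n]
      exact Finset.sum_congr rfl fun i _ => by rw [hPlt i]
    rw [h1, add_comm]
    congr 1
    ext a b
    simp only [Matrix.mul_apply, Matrix.sum_apply, Fintype.sum_prod_type, xiD, Matrix.of_apply,
      Matrix.transpose_apply, hΨdef, hZdef]
  -- symmetry of H
  have hHsym : (HmatD m n t)ᵀ = HmatD m n t := by
    rw [Hrepr m hsym n t]
    rw [Matrix.transpose_add, Matrix.transpose_mul, Matrix.transpose_mul,
      Matrix.transpose_transpose, Matrix.transpose_neg, Matrix.transpose_nonsing_inv, hMsym]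
    rw [← hsym n n t]
    congr 1
    rw [Matrix.mul_neg, Matrix.neg_mul, Matrix.neg_mul, Matrix.mul_assoc, Matrix.mul_neg]
  -- apply alg2
  have halg2 : (∑ k ∈ Finset.range (n + 1), P k * φ k t)
        * (∑ l ∈ Finset.range (n + 1), φ l t * (P l)ᵀ)
      = (P (n - 1) - Q n) * HmatD m n t + HmatD m n t * (P (n - 1) - Q n)ᵀ :=
    alg2 hn P Q (fun i j => m i j t) (fun i => φ i t) (HmatD m n t) (P (n - 1) - Q n)
      (fun i j => hsym i j t) (fun i j => hphi i j t) hOP hOPH hOQ hPn hPn1 hQn1 rfl hHsym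
  have hPval : P (n - 1) = xiD m n ⟨n - 1, by omega⟩ t := by
    simp only [hPdef, dif_pos (by omega : n - 1 < n)]
  have hQval : Q n = xiD m (n + 1) ⟨n, by omega⟩ t := by
    simp only [hQdef, dif_pos (by omega : n < n + 1)]
  rw [hPval, hQval] at halg2
  have hfinal : φ n t * φ n t + (((-R') * N + (-r) * (-(N * M' * N))) * rᵀ + Z * R'ᵀ)
      = (xiD m n ⟨n - 1, by omega⟩ t - xiD m (n + 1) ⟨n, by omega⟩ t) * HmatD m n t
        + HmatD m n t * (xiD m n ⟨n - 1, by omega⟩ t - xiD m (n + 1) ⟨n, by omega⟩ t)ᵀ := by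
    rw [halg1, hVs, hWs, halg2]
  rw [hfinal] at hHd
  exact hHd
end
end

section
/- Fix n ≥ 0 and assume that for all t the matrices V_n(t), V_{n+1}(t) and H_n(t) are invertible, with a_n = −V_{n+1} V_n^{-1}. Then for all t ∈ ℝ: ∂_t H_{n+1} = a_n · (∂_t H_n) · a_n^T and ∂_t ξ_{n+1,n} = a_n · (∂_t H_n) · H_n^{-1}. -/
open Matrix

attribute [local instance] Matrix.normedAddCommGroup Matrix.normedSpace

noncomputable section

section infra
variable {ι κ ρ : Type*} [Fintype ι] [Fintype κ] [Fintype ρ]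

lemma hasDerivAt_of_entries {F : ℝ → Matrix ι κ ℝ} {A : Matrix ι κ ℝ} {t : ℝ}
    (h : ∀ a b, HasDerivAt (fun t => F t a b) (A a b) t) : HasDerivAt F A t :=
  hasDerivAt_pi.2 fun a => hasDerivAt_pi.2 fun b => h a b

lemma HasDerivAt.entry {F : ℝ → Matrix ι κ ℝ} {A : Matrix ι κ ℝ} {t : ℝ}
    (h : HasDerivAt F A t) (a : ι) (b : κ) : HasDerivAt (fun t => F t a b) (A a b) t :=
  hasDerivAt_pi.1 (hasDerivAt_pi.1 h a) b

lemma differentiableAt_of_entries {F : ℝ → Matrix ι κ ℝ} {t : ℝ}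
    (h : ∀ a b, DifferentiableAt ℝ (fun t => F t a b) t) : DifferentiableAt ℝ F t :=
  (hasDerivAt_of_entries (A := Matrix.of fun a b => deriv (fun t => F t a b) t)
    (fun a b => (h a b).hasDerivAt)).differentiableAt

lemma HasDerivAt.matMul {F : ℝ → Matrix ι κ ℝ} {G : ℝ → Matrix κ ρ ℝ}
    {A : Matrix ι κ ℝ} {B : Matrix κ ρ ℝ} {t : ℝ}
    (hF : HasDerivAt F A t) (hG : HasDerivAt G B t) :
    HasDerivAt (fun t => F t * G t) (A * G t + F t * B) t := by
  apply hasDerivAt_of_entries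
  intro a b
  have h1 : ∀ k : κ, HasDerivAt (fun t => F t a k * G t k b)
      (A a k * G t k b + F t a k * B k b) t :=
    fun k => (hF.entry a k).mul (hG.entry k b)
  have h2 := HasDerivAt.fun_sum (fun k (_ : k ∈ Finset.univ) => h1 k)
  have heq : (fun y => ∑ k : κ, F y a k * G y k b) = fun y => (F y * G y) a b := by
    funext s; simp [Matrix.mul_apply]
  rw [heq] at h2
  refine h2.congr_deriv ?_
  simp [Matrix.mul_apply, Matrix.add_apply, Finset.sum_add_distrib]

lemma HasDerivAt.matTranspose {F : ℝ → Matrix ι κ ℝ} {A : Matrix ι κ ℝ} {t : ℝ}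
    (h : HasDerivAt F A t) : HasDerivAt (fun t => (F t)ᵀ) Aᵀ t :=
  hasDerivAt_of_entries fun a b => h.entry b a

lemma differentiableAt_det {B : ℝ → Matrix ι ι ℝ} [DecidableEq ι] {t : ℝ}
    (h : ∀ a b, DifferentiableAt ℝ (fun t => B t a b) t) :
    DifferentiableAt ℝ (fun t => (B t).det) t := by
  simp only [Matrix.det_apply']
  exact DifferentiableAt.fun_sum fun σ _ =>
    (differentiableAt_const _).mul (DifferentiableAt.fun_finsetProd fun i _ => h (σ i) i)

lemma differentiableAt_inv_entry {B : ℝ → Matrix ι ι ℝ} [DecidableEq ι] {t : ℝ}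
    (h : ∀ a b, DifferentiableAt ℝ (fun t => B t a b) t) (hu : IsUnit (B t)) (a b : ι) :
    DifferentiableAt ℝ (fun t => (B t)⁻¹ a b) t := by
  have hdet : ∀ s, (B s)⁻¹ a b = ((B s).det)⁻¹ * (B s).adjugate a b := by
    intro s
    rw [Matrix.inv_def, Matrix.smul_apply, smul_eq_mul, Ring.inverse_eq_inv]
  simp only [hdet]
  have h1 : DifferentiableAt ℝ (fun s => (B s).det) t := differentiableAt_det h
  have hne : (B t).det ≠ 0 := ((Matrix.isUnit_iff_isUnit_det _).mp hu).ne_zero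
  have h2 : DifferentiableAt ℝ (fun s => (B s).adjugate a b) t := by
    have hadj : ∀ s, (B s).adjugate a b = ((B s).updateRow b (Pi.single a 1)).det := by
      intro s; rw [Matrix.adjugate_apply]
    simp only [hadj]
    apply differentiableAt_det
    intro c d
    simp only [Matrix.updateRow_apply]
    by_cases hc : c = b
    · simp [hc]
    · simpa [hc] using h c d
  exact (h1.inv hne).mul h2

end infra


section core
variable {p : ℕ} {m : ℕ → ℕ → ℝ → Mp p}

lemma orth (hM : ∀ n t, IsUnit (blockM m n t)) (N : ℕ) (j : Fin N) (t : ℝ) :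
    m N j t + ∑ i : Fin N, xiD m N i t * m i j t = 0 := by
  have hd : IsUnit (blockM m N t).det := (Matrix.isUnit_iff_isUnit_det _).mp (hM N t)
  have h1 : (-(rowm m N t)) * (blockM m N t)⁻¹ * blockM m N t = -(rowm m N t) := by
    rw [Matrix.mul_assoc, Matrix.nonsing_inv_mul _ hd, Matrix.mul_one]
  ext a b
  have h2 := congrFun (congrFun h1 a) (j, b)
  have h3 : ∑ i : Fin N, ∑ k : Fin p, xiD m N i t a k * m i j t k b = -(m N j t a b) := by
    calc ∑ i : Fin N, ∑ k : Fin p, xiD m N i t a k * m i j t k b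
        = ∑ c : Fin N × Fin p, ((-(rowm m N t)) * (blockM m N t)⁻¹) a c
            * blockM m N t c (j, b) := by
          rw [Fintype.sum_prod_type]
          rfl
      _ = -(m N j t a b) := by
          rw [← Matrix.mul_apply]; exact h2
  simp [Matrix.add_apply, Matrix.sum_apply, Matrix.mul_apply, h3]

lemma orthT (hsym : ∀ i j t, m i j t = (m j i t)ᵀ)
    (hM : ∀ n t, IsUnit (blockM m n t)) (N : ℕ) (j : Fin N) (t : ℝ) :
    m j N t + ∑ i : Fin N, m j i t * (xiD m N i t)ᵀ = 0 := by
  have h := congrArg Matrix.transpose (orth hM N j t)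
  simpa [Matrix.transpose_add, Matrix.transpose_sum, Matrix.transpose_mul,
    ← hsym] using h

lemma differentiableAt_xi
    (hderiv : ∀ i j t, HasDerivAt (m i j) (m (i + 1) j t + m i (j + 1) t) t)
    (hM : ∀ n t, IsUnit (blockM m n t)) (N : ℕ) (i : Fin N) (t : ℝ) :
    DifferentiableAt ℝ (xiD m N i) t := by
  have hent : ∀ (a b : ℕ) (c d : Fin p), DifferentiableAt ℝ (fun t => m a b t c d) t :=
    fun a b c d => ((hderiv a b t).entry c d).differentiableAt
  have hblock : ∀ c d : Fin N × Fin p, DifferentiableAt ℝ (fun t => blockM m N t c d) t :=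
    fun c d => hent _ _ _ _
  have hinv : ∀ c d : Fin N × Fin p, DifferentiableAt ℝ (fun t => (blockM m N t)⁻¹ c d) t :=
    fun c d => differentiableAt_inv_entry hblock (hM N t) c d
  apply differentiableAt_of_entries
  intro a b
  have : ∀ s, xiD m N i s a b
      = ∑ c : Fin N × Fin p, (-(rowm m N s)) a c * (blockM m N s)⁻¹ c (i, b) := by
    intro s; rw [xiD, Matrix.of_apply, Matrix.mul_apply]
  simp only [this]
  apply DifferentiableAt.fun_sum
  intro c _
  exact (((hent _ _ _ _).neg)).mul (hinv c (i, b))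

end core


/-- `W_n(t) = φ_nᵀ + Σ ξ_{n,i} φ_iᵀ`. -/
def WD {p : ℕ} (m : ℕ → ℕ → ℝ → Mp p) (φ : ℕ → ℝ → Mp p) (n : ℕ) (t : ℝ) : Mp p :=
  (φ n t)ᵀ + ∑ i : Fin n, xiD m n i t * (φ i t)ᵀ

section core2
variable {p : ℕ} {m : ℕ → ℕ → ℝ → Mp p} {φ : ℕ → ℝ → Mp p}

lemma hdm (hderiv : ∀ i j t, HasDerivAt (m i j) (m (i + 1) j t + m i (j + 1) t) t)
    (hphi : ∀ i j t, m (i + 1) j t + m i (j + 1) t = φ i t * φ j t)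
    (i j : ℕ) (t : ℝ) : HasDerivAt (m i j) (φ i t * φ j t) t :=
  hphi i j t ▸ hderiv i j t

lemma hphiT (hsym : ∀ i j t, m i j t = (m j i t)ᵀ)
    (hderiv : ∀ i j t, HasDerivAt (m i j) (m (i + 1) j t + m i (j + 1) t) t)
    (hphi : ∀ i j t, m (i + 1) j t + m i (j + 1) t = φ i t * φ j t)
    (i j : ℕ) (t : ℝ) : φ i t * φ j t = (φ i t)ᵀ * (φ j t)ᵀ := by
  have h2 : HasDerivAt (fun s => (m j i s)ᵀ) ((φ j t * φ i t)ᵀ) t :=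
    (hdm hderiv hphi j i t).matTranspose
  have hfun : m i j = fun s => (m j i s)ᵀ := funext fun s => hsym i j s
  rw [← hfun] at h2
  have h3 := (hdm hderiv hphi i j t).unique h2
  rw [h3, Matrix.transpose_mul]

lemma orth' (hM : ∀ n t, IsUnit (blockM m n t)) (N : ℕ) (j : Fin N) (t : ℝ) :
    m N j t = -(∑ i : Fin N, xiD m N i t * m i j t) :=
  eq_neg_of_add_eq_zero_left (orth hM N j t)

lemma orthT' (hsym : ∀ i j t, m i j t = (m j i t)ᵀ)
    (hM : ∀ n t, IsUnit (blockM m n t)) (N : ℕ) (j : Fin N) (t : ℝ) :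
    m j N t = -(∑ i : Fin N, m j i t * (xiD m N i t)ᵀ) :=
  eq_neg_of_add_eq_zero_left (orthT hsym hM N j t)

lemma star (hsym : ∀ i j t, m i j t = (m j i t)ᵀ)
    (hderiv : ∀ i j t, HasDerivAt (m i j) (m (i + 1) j t + m i (j + 1) t) t)
    (hphi : ∀ i j t, m (i + 1) j t + m i (j + 1) t = φ i t * φ j t)
    (hM : ∀ n t, IsUnit (blockM m n t)) (N : ℕ) (j : Fin N) (t : ℝ) :
    ∑ i : Fin N, deriv (xiD m N i) t * m i j t
      = -(φ N t * φ j t + ∑ i : Fin N, xiD m N i t * (φ i t * φ j t)) := by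
  have hD : ∀ i : Fin N, HasDerivAt (xiD m N i) (deriv (xiD m N i) t) t :=
    fun i => (differentiableAt_xi hderiv hM N i t).hasDerivAt
  have h0 : HasDerivAt (fun s => m N j s + ∑ i : Fin N, xiD m N i s * m i j s)
      (φ N t * φ j t + ∑ i : Fin N,
        (deriv (xiD m N i) t * m i j t + xiD m N i t * (φ i t * φ j t))) t :=
    (hdm hderiv hphi N j t).add
      (HasDerivAt.fun_sum fun i _ => (hD i).matMul (hdm hderiv hphi i j t))
  have hzero : (fun s => m N j s + ∑ i : Fin N, xiD m N i s * m i j s)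
      = fun _ => (0 : Mp p) := funext fun s => orth hM N j s
  rw [hzero] at h0
  have h1 := h0.unique (hasDerivAt_const t 0)
  have h3 : (∑ i : Fin N, deriv (xiD m N i) t * m i j t)
      + (φ N t * φ j t + ∑ i : Fin N, xiD m N i t * (φ i t * φ j t)) = 0 := by
    rw [← h1, Finset.sum_add_distrib]; abel
  exact eq_neg_of_add_eq_zero_left h3

lemma Hrow (hsym : ∀ i j t, m i j t = (m j i t)ᵀ)
    (hM : ∀ n t, IsUnit (blockM m n t)) (N : ℕ) (t : ℝ) :
    m N N t + ∑ j : Fin N, m N j t * (xiD m N j t)ᵀ = HmatD m N t := by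
  unfold HmatD
  congr 1
  calc ∑ j : Fin N, m N j t * (xiD m N j t)ᵀ
      = ∑ j : Fin N, (-(∑ i : Fin N, xiD m N i t * m i j t)) * (xiD m N j t)ᵀ := by
        exact Finset.sum_congr rfl fun j _ => by rw [← orth' hM N j t]
    _ = -∑ j : Fin N, ∑ i : Fin N, xiD m N i t * (m i j t * (xiD m N j t)ᵀ) := by
        simp [Finset.sum_mul, mul_assoc]
    _ = ∑ i : Fin N, xiD m N i t * (-(∑ j : Fin N, m i j t * (xiD m N j t)ᵀ)) := by
        rw [Finset.sum_comm]
        simp [Finset.mul_sum]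
    _ = ∑ i : Fin N, xiD m N i t * m i N t := by
        exact Finset.sum_congr rfl fun i _ => by rw [← orthT' hsym hM N i t]

lemma Hsymm (hsym : ∀ i j t, m i j t = (m j i t)ᵀ)
    (hM : ∀ n t, IsUnit (blockM m n t)) (N : ℕ) (t : ℝ) :
    (HmatD m N t)ᵀ = HmatD m N t := by
  have h1 : (HmatD m N t)ᵀ = m N N t + ∑ j : Fin N, m N j t * (xiD m N j t)ᵀ := by
    unfold HmatD
    rw [Matrix.transpose_add, Matrix.transpose_sum]
    congr 1
    · exact (hsym N N t).symm
    · exact Finset.sum_congr rfl fun j _ => by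
        rw [Matrix.transpose_mul, ← hsym N j t]
  rw [h1, Hrow hsym hM]

lemma expand4 {a b : ℕ} (A B : Mp p) (f : Fin a → Mp p) (g : Fin b → Mp p) :
    (A + ∑ i, f i) * (B + ∑ j, g j)
      = A * B + ∑ j, A * g j + ∑ i, f i * B + ∑ i, ∑ j, f i * g j := by
  simp only [add_mul, mul_add, Finset.sum_mul, Finset.mul_sum, Finset.sum_add_distrib]
  rw [Finset.sum_comm]
  abel

lemma VTexp (N : ℕ) (t : ℝ) :
    (VD m φ N t)ᵀ = (φ N t)ᵀ + ∑ j : Fin N, (φ j t)ᵀ * (xiD m N j t)ᵀ := by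
  simp [VD, Matrix.transpose_add, Matrix.transpose_sum, Matrix.transpose_mul]

lemma WTexp (N : ℕ) (t : ℝ) :
    (WD m φ N t)ᵀ = φ N t + ∑ j : Fin N, φ j t * (xiD m N j t)ᵀ := by
  simp [WD, Matrix.transpose_add, Matrix.transpose_sum, Matrix.transpose_mul]

end core2


section core3
variable {p : ℕ} {m : ℕ → ℕ → ℝ → Mp p} {φ : ℕ → ℝ → Mp p}

lemma swapVW (hsym : ∀ i j t, m i j t = (m j i t)ᵀ)
    (hderiv : ∀ i j t, HasDerivAt (m i j) (m (i + 1) j t + m i (j + 1) t) t)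
    (hphi : ∀ i j t, m (i + 1) j t + m i (j + 1) t = φ i t * φ j t)
    (a b : ℕ) (t : ℝ) :
    VD m φ a t * (WD m φ b t)ᵀ = WD m φ a t * (VD m φ b t)ᵀ := by
  rw [WTexp, VTexp]
  unfold VD WD
  rw [expand4, expand4]
  congr 1
  · congr 1
    · congr 1
      · exact hphiT hsym hderiv hphi a b t
      · exact Finset.sum_congr rfl fun j _ => by
          rw [← mul_assoc, ← mul_assoc, hphiT hsym hderiv hphi a j t]
    · exact Finset.sum_congr rfl fun i _ => by
        rw [mul_assoc, mul_assoc, hphiT hsym hderiv hphi i b t]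
  · refine Finset.sum_congr rfl fun i _ => Finset.sum_congr rfl fun j _ => ?_
    rw [mul_assoc, mul_assoc, ← mul_assoc (φ i t), ← mul_assoc ((φ i t)ᵀ),
      hphiT hsym hderiv hphi i j t]

lemma hasDerivAt_H (hsym : ∀ i j t, m i j t = (m j i t)ᵀ)
    (hderiv : ∀ i j t, HasDerivAt (m i j) (m (i + 1) j t + m i (j + 1) t) t)
    (hphi : ∀ i j t, m (i + 1) j t + m i (j + 1) t = φ i t * φ j t)
    (hM : ∀ n t, IsUnit (blockM m n t)) (N : ℕ) (t : ℝ) :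
    HasDerivAt (HmatD m N) (WD m φ N t * (VD m φ N t)ᵀ) t := by
  have hD : ∀ i : Fin N, HasDerivAt (xiD m N i) (deriv (xiD m N i) t) t :=
    fun i => (differentiableAt_xi hderiv hM N i t).hasDerivAt
  have h0 : HasDerivAt (fun s => m N N s + ∑ i : Fin N, xiD m N i s * m i N s)
      (φ N t * φ N t + ∑ i : Fin N,
        (deriv (xiD m N i) t * m i N t + xiD m N i t * (φ i t * φ N t))) t :=
    (hdm hderiv hphi N N t).add
      (HasDerivAt.fun_sum fun i _ => (hD i).matMul (hdm hderiv hphi i N t))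
  have hfun : HmatD m N = fun s => m N N s + ∑ i : Fin N, xiD m N i s * m i N s := rfl
  rw [hfun]
  convert h0 using 1
  -- now prove:  WD * VDᵀ = E
  have eB : ∑ i : Fin N, deriv (xiD m N i) t * m i N t
      = ∑ j : Fin N, (φ N t * φ j t) * (xiD m N j t)ᵀ
        + ∑ j : Fin N, ∑ i : Fin N, (xiD m N i t * (φ i t * φ j t)) * (xiD m N j t)ᵀ := by
    calc ∑ i : Fin N, deriv (xiD m N i) t * m i N t
        = ∑ i : Fin N, deriv (xiD m N i) t * (-(∑ j : Fin N, m i j t * (xiD m N j t)ᵀ)) :=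
          Finset.sum_congr rfl fun i _ => by rw [← orthT' hsym hM N i t]
      _ = -∑ j : Fin N, (∑ i : Fin N, deriv (xiD m N i) t * m i j t) * (xiD m N j t)ᵀ := by
          simp only [mul_neg, Finset.mul_sum, Finset.sum_neg_distrib, ← mul_assoc]
          rw [Finset.sum_comm]
          simp [Finset.sum_mul]
      _ = -∑ j : Fin N, (-(φ N t * φ j t
            + ∑ i : Fin N, xiD m N i t * (φ i t * φ j t))) * (xiD m N j t)ᵀ := by
          congr 1
          exact Finset.sum_congr rfl fun j _ => by
            rw [star hsym hderiv hphi hM N j t]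
      _ = ∑ j : Fin N, (φ N t * φ j t
            + ∑ i : Fin N, xiD m N i t * (φ i t * φ j t)) * (xiD m N j t)ᵀ := by
          simp only [neg_mul, Finset.sum_neg_distrib, neg_neg]
      _ = ∑ j : Fin N, (φ N t * φ j t) * (xiD m N j t)ᵀ
          + ∑ j : Fin N, ∑ i : Fin N, (xiD m N i t * (φ i t * φ j t)) * (xiD m N j t)ᵀ := by
          simp [add_mul, Finset.sum_add_distrib, Finset.sum_mul]
  rw [Finset.sum_add_distrib, eB, VTexp]
  unfold WD
  rw [expand4]
  have e1 : φ N t * φ N t = (φ N t)ᵀ * (φ N t)ᵀ := hphiT hsym hderiv hphi N N t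
  have e2 : ∑ j : Fin N, (φ N t * φ j t) * (xiD m N j t)ᵀ
      = ∑ j : Fin N, (φ N t)ᵀ * ((φ j t)ᵀ * (xiD m N j t)ᵀ) :=
    Finset.sum_congr rfl fun j _ => by
      rw [hphiT hsym hderiv hphi N j t, mul_assoc]
  have e3 : ∑ i : Fin N, xiD m N i t * (φ i t * φ N t)
      = ∑ i : Fin N, (xiD m N i t * (φ i t)ᵀ) * (φ N t)ᵀ :=
    Finset.sum_congr rfl fun i _ => by
      rw [hphiT hsym hderiv hphi i N t, mul_assoc]
  have e4 : ∑ j : Fin N, ∑ i : Fin N, (xiD m N i t * (φ i t * φ j t)) * (xiD m N j t)ᵀ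
      = ∑ i : Fin N, ∑ j : Fin N, (xiD m N i t * (φ i t)ᵀ) * ((φ j t)ᵀ * (xiD m N j t)ᵀ) := by
    rw [Finset.sum_comm]
    refine Finset.sum_congr rfl fun i _ => Finset.sum_congr rfl fun j _ => ?_
    rw [hphiT hsym hderiv hphi i j t, ← mul_assoc, mul_assoc (xiD m N i t * (φ i t)ᵀ)]
  rw [e1, e2, e3, e4]
  abel

end core3


section core4
variable {p : ℕ} {m : ℕ → ℕ → ℝ → Mp p} {φ : ℕ → ℝ → Mp p}

lemma xi'H (hsym : ∀ i j t, m i j t = (m j i t)ᵀ)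
    (hderiv : ∀ i j t, HasDerivAt (m i j) (m (i + 1) j t + m i (j + 1) t) t)
    (hphi : ∀ i j t, m (i + 1) j t + m i (j + 1) t = φ i t * φ j t)
    (hM : ∀ n t, IsUnit (blockM m n t)) (n : ℕ) (t : ℝ) :
    deriv (xiD m (n + 1) ⟨n, Nat.lt_succ_self n⟩) t * HmatD m n t
      = -(VD m φ (n + 1) t * (WD m φ n t)ᵀ) := by
  set E : Fin (n + 1) → Mp p :=
    fun j => if h : (j : ℕ) < n then (xiD m n ⟨j, h⟩ t)ᵀ else 1 with hE
  have hEcast : ∀ j : Fin n, E j.castSucc = (xiD m n j t)ᵀ := by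
    intro j
    simp [hE, j.isLt]
  have hElast : E (Fin.last n) = 1 := by simp [hE]
  -- the double sum S, computed two ways
  have hV : ∀ j : ℕ, φ (n + 1) t * φ j t
      + ∑ i : Fin (n + 1), xiD m (n + 1) i t * (φ i t * φ j t)
      = VD m φ (n + 1) t * φ j t := by
    intro j
    unfold VD
    rw [add_mul, Finset.sum_mul]
    simp [mul_assoc]
  have w1 : ∑ j : Fin (n + 1),
        (∑ i : Fin (n + 1), deriv (xiD m (n + 1) i) t * m i j t) * E j
      = -(VD m φ (n + 1) t * (WD m φ n t)ᵀ) := by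
    have hWT : ∑ j : Fin (n + 1), φ j t * E j = (WD m φ n t)ᵀ := by
      rw [Fin.sum_univ_castSucc, WTexp, hElast]
      simp only [hEcast, Fin.coe_castSucc, Fin.val_last, mul_one]
      rw [add_comm]
    calc ∑ j : Fin (n + 1),
          (∑ i : Fin (n + 1), deriv (xiD m (n + 1) i) t * m i j t) * E j
        = ∑ j : Fin (n + 1), -(VD m φ (n + 1) t * (φ j t * E j)) := by
          refine Finset.sum_congr rfl fun j _ => ?_
          rw [star hsym hderiv hphi hM (n + 1) j t, hV j]
          rw [neg_mul, mul_assoc]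
      _ = -(VD m φ (n + 1) t * (WD m φ n t)ᵀ) := by
          rw [Finset.sum_neg_distrib, ← Finset.mul_sum, hWT]
  have hinner : ∀ i : Fin (n + 1), (∑ j : Fin (n + 1), m i j t * E j)
      = if (i : ℕ) < n then 0 else HmatD m n t := by
    intro i
    rw [Fin.sum_univ_castSucc, hElast, mul_one]
    simp only [hEcast, Fin.coe_castSucc, Fin.val_last]
    by_cases h : (i : ℕ) < n
    · rw [if_pos h]
      have := orthT hsym hM n ⟨i, h⟩ t
      rw [add_comm] at this
      simpa using this
    · rw [if_neg h]
      have hi : (i : ℕ) = n := Nat.le_antisymm (Nat.lt_succ_iff.mp i.isLt) (Nat.le_of_not_lt h)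
      rw [hi]
      have := Hrow hsym hM n t
      rw [add_comm] at this
      exact this
  have w2 : ∑ j : Fin (n + 1),
        (∑ i : Fin (n + 1), deriv (xiD m (n + 1) i) t * m i j t) * E j
      = deriv (xiD m (n + 1) ⟨n, Nat.lt_succ_self n⟩) t * HmatD m n t := by
    calc ∑ j : Fin (n + 1),
          (∑ i : Fin (n + 1), deriv (xiD m (n + 1) i) t * m i j t) * E j
        = ∑ i : Fin (n + 1), deriv (xiD m (n + 1) i) t
            * (∑ j : Fin (n + 1), m i j t * E j) := by
          simp only [Finset.sum_mul, Finset.mul_sum, mul_assoc]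
          rw [Finset.sum_comm]
      _ = ∑ i : Fin (n + 1), deriv (xiD m (n + 1) i) t
            * (if (i : ℕ) < n then 0 else HmatD m n t) := by
          exact Finset.sum_congr rfl fun i _ => by rw [hinner i]
      _ = deriv (xiD m (n + 1) ⟨n, Nat.lt_succ_self n⟩) t * HmatD m n t := by
          rw [Fin.sum_univ_castSucc]
          simp only [Fin.coe_castSucc, Fin.val_last]
          have h1 : ∀ j : Fin n, deriv (xiD m (n + 1) j.castSucc) t
              * (if (j : ℕ) < n then 0 else HmatD m n t) = 0 := by
            intro j
            simp [j.isLt]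
          rw [Finset.sum_congr rfl fun j _ => h1 j]
          simp only [Finset.sum_const_zero, zero_add, if_neg (lt_irrefl n)]
          rfl
  rw [← w2, w1]

end core4


/-- Fix `n ≥ 0` and assume that for all `t` the matrices `V_n(t)`, `V_{n+1}(t)` and `H_n(t)`
are invertible, with `a_n = −V_{n+1} V_n⁻¹`.  Then for all `t ∈ ℝ`:
`∂_t H_{n+1} = a_n (∂_t H_n) a_nᵀ` and `∂_t ξ_{n+1,n} = a_n (∂_t H_n) H_n⁻¹`. -/
theorem stmt15 {p : ℕ} (hp : 1 ≤ p) (m : ℕ → ℕ → ℝ → Mp p) (φ : ℕ → ℝ → Mp p)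
    (hsym : ∀ i j t, m i j t = (m j i t)ᵀ)
    (hderiv : ∀ i j t, HasDerivAt (m i j) (m (i + 1) j t + m i (j + 1) t) t)
    (hphi : ∀ i j t, m (i + 1) j t + m i (j + 1) t = φ i t * φ j t)
    (hM : ∀ n t, IsUnit (blockM m n t))
    (n : ℕ)
    (hV1 : ∀ t, IsUnit (VD m φ n t)) (hV2 : ∀ t, IsUnit (VD m φ (n + 1) t))
    (hH : ∀ t, IsUnit (HmatD m n t)) :
    ∀ t : ℝ,
      deriv (HmatD m (n + 1)) t = aD m φ n t * deriv (HmatD m n) t * (aD m φ n t)ᵀ ∧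
      deriv (xiD m (n + 1) ⟨n, Nat.lt_succ_self n⟩) t
        = aD m φ n t * deriv (HmatD m n) t * (HmatD m n t)⁻¹ := by
  intro t
  have hVnd : IsUnit (VD m φ n t).det := (Matrix.isUnit_iff_isUnit_det _).mp (hV1 t)
  have hHd : IsUnit (HmatD m n t).det := (Matrix.isUnit_iff_isUnit_det _).mp (hH t)
  have hdHn : deriv (HmatD m n) t = WD m φ n t * (VD m φ n t)ᵀ :=
    (hasDerivAt_H hsym hderiv hphi hM n t).deriv
  have hdHm : deriv (HmatD m (n + 1)) t = WD m φ (n + 1) t * (VD m φ (n + 1) t)ᵀ :=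
    (hasDerivAt_H hsym hderiv hphi hM (n + 1) t).deriv
  have k1 : (VD m φ n t)ᵀ * ((VD m φ n t)⁻¹)ᵀ = 1 := by
    rw [← Matrix.transpose_mul, Matrix.nonsing_inv_mul _ hVnd, Matrix.transpose_one]
  constructor
  · rw [hdHm, hdHn]
    have k2 : WD m φ n t * (VD m φ (n + 1) t)ᵀ = VD m φ n t * (WD m φ (n + 1) t)ᵀ :=
      (swapVW hsym hderiv hphi n (n + 1) t).symm
    have k3 : VD m φ (n + 1) t * (WD m φ (n + 1) t)ᵀ
        = WD m φ (n + 1) t * (VD m φ (n + 1) t)ᵀ :=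
      swapVW hsym hderiv hphi (n + 1) (n + 1) t
    simp only [aD, Matrix.transpose_neg, Matrix.transpose_mul, neg_mul, mul_neg, neg_neg,
      mul_assoc]
    rw [← mul_assoc (VD m φ n t)ᵀ, k1, one_mul, k2, ← mul_assoc (VD m φ n t)⁻¹,
      Matrix.nonsing_inv_mul _ hVnd, one_mul]
    exact k3.symm
  · have hx := xi'H hsym hderiv hphi hM n t
    have hd2 : deriv (xiD m (n + 1) ⟨n, Nat.lt_succ_self n⟩) t
        = -(VD m φ (n + 1) t * (WD m φ n t)ᵀ) * (HmatD m n t)⁻¹ := by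
      have h5 := congrArg (fun X => X * (HmatD m n t)⁻¹) hx
      simpa [mul_assoc, Matrix.mul_nonsing_inv _ hHd] using h5
    rw [hd2, hdHn]
    have k4 : WD m φ n t * (VD m φ n t)ᵀ = VD m φ n t * (WD m φ n t)ᵀ :=
      (swapVW hsym hderiv hphi n n t).symm
    simp only [aD, neg_mul, mul_assoc, neg_inj]
    rw [← mul_assoc (WD m φ n t), k4, mul_assoc, ← mul_assoc (VD m φ n t)⁻¹,
      Matrix.nonsing_inv_mul _ hVnd, one_mul]
end
end
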